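/- The curvature c_f of the budget allocation function f satisfies c_f ≤ 1 - min_{a∈A} min_{b∈B: a∈Γ(b)} p(a)^{c(a)-1} · ∏_{a'∈Γ(b)\{a}} p(a')^{c(a')}. -/

import Mathlib

open Finset

theorem budget_allocation_curvature_bound
    {A B : Type*} [Fintype A] [DecidableEq A] [Nonempty A] [Fintype B]
    (Γ : B → Finset A) (p : A → ℝ) (hp : ∀ a, p a ∈ Set.Ico (0:ℝ) 1)
    (hΓ : ∀ a : A, (Finset.univ.filter (fun b : B => a ∈ Γ b)).Nonempty)
    (c : A → ℕ) (hc : ∀ a, 1 ≤ c a)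
    (Egnd : Finset (A × ℕ))
    (hE : Egnd = Finset.univ.biUnion (fun a => {a} ×ˢ Finset.Icc 1 (c a)))
    (hne : Egnd.Nonempty)
    (f : Finset (A × ℕ) → ℝ)
    (hf : ∀ S : Finset (A × ℕ), f S = ∑ b : B,
      (1 - ∏ a ∈ Γ b, p a ^ (S ∩ ({a} ×ˢ Finset.Icc 1 (c a))).card))
    (cf : ℝ)
    (hcf : cf = 1 - Egnd.inf' hne (fun e => (f Egnd - f (Egnd.erase e)) / f {e})) :
    cf ≤ 1 - Finset.univ.inf' Finset.univ_nonempty (fun a : A =>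
      (Finset.univ.filter (fun b : B => a ∈ Γ b)).inf' (hΓ a) (fun b =>
        p a ^ (c a - 1) * ∏ a' ∈ (Γ b).erase a, p a' ^ c a')) := by
  subst hcf
  rw [sub_le_sub_iff_left]
  apply Finset.le_inf'
  rintro ⟨a, i⟩ he
  have hai : i ∈ Finset.Icc 1 (c a) := by
    rw [hE, Finset.mem_biUnion] at he
    obtain ⟨a', -, ha'⟩ := he
    have h2 := Finset.mem_product.1 ha'
    have h3 : a = a' := Finset.mem_singleton.1 h2.1
    rw [h3]
    exact h2.2
  have hpa := hp a
  have hpa0 : (0:ℝ) ≤ p a := hpa.1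
  have hpa1 : (0:ℝ) < 1 - p a := by linarith [hpa.2]
  have hmemE : (a, i) ∈ ({a} ×ˢ Finset.Icc 1 (c a)) :=
    Finset.mem_product.2 ⟨Finset.mem_singleton_self a, hai⟩
  have hsub : ∀ a' : A, ({a'} ×ˢ Finset.Icc 1 (c a')) ⊆ Egnd := by
    intro a' x hx
    rw [hE]
    exact Finset.mem_biUnion.2 ⟨a', Finset.mem_univ _, hx⟩
  -- intersection cardinalities
  have hcard1 : ∀ a' : A,
      (({(a,i)} : Finset (A×ℕ)) ∩ ({a'} ×ˢ Finset.Icc 1 (c a'))).card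
        = if a' = a then 1 else 0 := by
    intro a'
    by_cases h : a' = a
    · subst h
      rw [Finset.inter_eq_left.2 (Finset.singleton_subset_iff.2 hmemE)]
      simp
    · rw [Finset.singleton_inter_of_notMem, Finset.card_empty, if_neg h]
      intro hx
      rw [Finset.mem_product, Finset.mem_singleton] at hx
      exact h hx.1.symm
  have hcardF : ∀ a' : A,
      (Egnd ∩ ({a'} ×ˢ Finset.Icc 1 (c a'))).card = c a' := by
    intro a'
    rw [Finset.inter_eq_right.2 (hsub a')]
    simp [Nat.add_sub_cancel]
  have hcardEr : ∀ a' : A,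
      ((Egnd.erase (a,i)) ∩ ({a'} ×ˢ Finset.Icc 1 (c a'))).card
        = if a' = a then c a - 1 else c a' := by
    intro a'
    by_cases h : a' = a
    · rw [if_pos h]
      have h1 : (Egnd.erase (a,i)) ∩ ({a'} ×ˢ Finset.Icc 1 (c a'))
          = (Egnd ∩ ({a'} ×ˢ Finset.Icc 1 (c a'))).erase (a,i) := by
        ext x
        simp only [Finset.mem_inter, Finset.mem_erase]
        tauto
      have hmem : (a, i) ∈ Egnd ∩ ({a'} ×ˢ Finset.Icc 1 (c a')) := by
        rw [h]
        exact Finset.mem_inter.2 ⟨hsub a hmemE, hmemE⟩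
      rw [h1, Finset.card_erase_of_mem hmem, hcardF, h]
    · have h1 : (Egnd.erase (a,i)) ∩ ({a'} ×ˢ Finset.Icc 1 (c a'))
          = Egnd ∩ ({a'} ×ˢ Finset.Icc 1 (c a')) := by
        ext x
        simp only [Finset.mem_inter, Finset.mem_erase]
        constructor
        · tauto
        · rintro ⟨hx1, hx2⟩
          refine ⟨⟨?_, hx1⟩, hx2⟩
          rintro rfl
          simp only [Finset.mem_product, Finset.mem_singleton] at hx2
          exact h hx2.1.symm
      rw [h1, hcardF, if_neg h]
  set F := Finset.univ.filter (fun b : B => a ∈ Γ b) with hF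
  set g : B → ℝ := fun b => p a ^ (c a - 1) * ∏ a' ∈ (Γ b).erase a, p a' ^ c a' with hg
  -- f of singleton
  have hfs : f {(a,i)} = (F.card : ℝ) * (1 - p a) := by
    rw [hf]
    have : ∀ b : B, (1 - ∏ a' ∈ Γ b, p a' ^
        (({(a,i)} : Finset (A×ℕ)) ∩ ({a'} ×ˢ Finset.Icc 1 (c a'))).card)
        = if a ∈ Γ b then 1 - p a else 0 := by
      intro b
      simp only [hcard1]
      rw [show (∏ a' ∈ Γ b, p a' ^ (if a' = a then 1 else 0))
          = ∏ a' ∈ Γ b, (if a' = a then p a' else 1) by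
        apply Finset.prod_congr rfl; intro x _; split <;> simp]
      rw [Finset.prod_ite_eq' (Γ b) a p]
      split <;> simp
    rw [Finset.sum_congr rfl (fun b _ => this b), ← Finset.sum_filter]
    rw [Finset.sum_const, nsmul_eq_mul]
  have hFpos : (0:ℝ) < (F.card : ℝ) := by
    exact_mod_cast Finset.card_pos.2 (hΓ a)
  have hfspos : 0 < f {(a,i)} := by
    rw [hfs]; positivity
  -- difference
  have hdiff : f Egnd - f (Egnd.erase (a,i)) = (1 - p a) * ∑ b ∈ F, g b := by
    rw [hf, hf, ← Finset.sum_sub_distrib]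
    have : ∀ b : B,
        ((1 - ∏ a' ∈ Γ b, p a' ^ (Egnd ∩ ({a'} ×ˢ Finset.Icc 1 (c a'))).card)
        - (1 - ∏ a' ∈ Γ b, p a' ^ ((Egnd.erase (a,i)) ∩ ({a'} ×ˢ Finset.Icc 1 (c a'))).card))
        = if a ∈ Γ b then (1 - p a) * g b else 0 := by
      intro b
      simp only [hcardF, hcardEr]
      by_cases hb : a ∈ Γ b
      · rw [if_pos hb]
        rw [← Finset.mul_prod_erase (Γ b) _ hb, ← Finset.mul_prod_erase (Γ b) _ hb]
        rw [if_pos rfl]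
        have hrest : ∀ a' ∈ (Γ b).erase a,
            p a' ^ (if a' = a then c a - 1 else c a') = p a' ^ c a' := by
          intro a' ha'
          rw [if_neg (Finset.ne_of_mem_erase ha')]
        rw [Finset.prod_congr rfl hrest]
        have hca := hc a
        have hpow : p a ^ c a = p a * p a ^ (c a - 1) := by
          conv_lhs => rw [show c a = 1 + (c a - 1) by omega]
          rw [pow_add, pow_one]
        rw [hpow, hg]
        ring
      · rw [if_neg hb]
        have : ∀ a' ∈ Γ b, p a' ^ (if a' = a then c a - 1 else c a') = p a' ^ c a' := by
          intro a' ha'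
          rw [if_neg]; rintro rfl; exact hb ha'
        rw [Finset.prod_congr rfl this]
        ring
    rw [Finset.sum_congr rfl (fun b _ => this b), ← Finset.sum_filter, ← hF,
      Finset.mul_sum]
  -- conclude
  have hmin : Finset.univ.inf' Finset.univ_nonempty (fun a : A =>
      (Finset.univ.filter (fun b : B => a ∈ Γ b)).inf' (hΓ a) (fun b =>
        p a ^ (c a - 1) * ∏ a' ∈ (Γ b).erase a, p a' ^ c a'))
      ≤ F.inf' (hΓ a) g :=
    Finset.inf'_le _ (Finset.mem_univ a)
  refine le_trans hmin ?_
  rw [hdiff, hfs, le_div_iff₀ (mul_pos hFpos hpa1)]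
  have hsum : (F.card : ℝ) * F.inf' (hΓ a) g ≤ ∑ b ∈ F, g b := by
    have := Finset.card_nsmul_le_sum F g (F.inf' (hΓ a) g)
      (fun b hb => Finset.inf'_le _ hb)
    simpa [nsmul_eq_mul] using this
  have hmul := mul_le_mul_of_nonneg_left hsum hpa1.le
  nlinarith [hmul]
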